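/- Let A, B be unitary d×d matrices and let C = ABA⁻¹B⁻¹ be their group commutator. Then ‖C − I‖ ≤ √2 · ‖A − I‖ · ‖B − I‖, where ‖M‖ = √(tr(M M†)) is the Hilbert–Schmidt (Frobenius) norm. -/

import Mathlib

open scoped Matrix
/-- The Hilbert–Schmidt (Frobenius) norm `‖M‖ = √(tr(M M†))`. -/
noncomputable def frobNorm {d : ℕ} (M : Matrix (Fin d) (Fin d) ℂ) : ℝ :=
  Real.sqrt ((M * Mᴴ).trace.re)

section Aux
open Matrix Module.End LinearMap

open Matrix Module.End LinearMap

variable {E : Type*} [NormedAddCommGroup E] [InnerProductSpace ℂ E] [FiniteDimensional ℂ E]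

/-- joint orthonormal eigenbasis for two commuting symmetric operators -/
theorem exists_joint_eigenbasis {n : ℕ} (hn : Module.finrank ℂ E = n)
    {P Q : E →ₗ[ℂ] E} (hP : P.IsSymmetric) (hQ : Q.IsSymmetric) (hPQ : Commute P Q) :
    ∃ (b : OrthonormalBasis (Fin n) ℂ E) (ν γ : Fin n → ℂ),
      ∀ i, P (b i) = ν i • b i ∧ Q (b i) = γ i • b i := by
  classical
  have hInt := LinearMap.IsSymmetric.directSum_isInternal_of_commute hP hQ hPQ
  have hindep : iSupIndep (fun i : ℂ × ℂ => eigenspace P i.2 ⊓ eigenspace Q i.1) :=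
    ((DirectSum.isInternal_submodule_iff_iSupIndep_and_iSup_eq_top _).mp hInt).1
  haveI : Fintype {i : ℂ × ℂ // eigenspace P i.2 ⊓ eigenspace Q i.1 ≠ ⊥} :=
    hindep.fintypeNeBotOfFiniteDimensional
  have hInt' : DirectSum.IsInternal
      (fun i : {i : ℂ × ℂ // eigenspace P i.2 ⊓ eigenspace Q i.1 ≠ ⊥} =>
        eigenspace P (i : ℂ × ℂ).2 ⊓ eigenspace Q (i : ℂ × ℂ).1) :=
    DirectSum.isInternal_ne_bot_iff.mpr hInt
  have fam' : OrthogonalFamily ℂ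
      (fun i : {i : ℂ × ℂ // eigenspace P i.2 ⊓ eigenspace Q i.1 ≠ ⊥} =>
        ↥(eigenspace P (i : ℂ × ℂ).2 ⊓ eigenspace Q (i : ℂ × ℂ).1))
      (fun i => (eigenspace P (i : ℂ × ℂ).2 ⊓ eigenspace Q (i : ℂ × ℂ).1).subtypeₗᵢ) :=
    (LinearMap.IsSymmetric.orthogonalFamily_eigenspace_inf_eigenspace hP hQ).comp
      Subtype.coe_injective
  refine ⟨hInt'.subordinateOrthonormalBasis hn fam',
    fun i => (hInt'.subordinateOrthonormalBasisIndex hn i fam').val.2,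
    fun i => (hInt'.subordinateOrthonormalBasisIndex hn i fam').val.1,
    fun i => ?_⟩
  have hmem := hInt'.subordinateOrthonormalBasis_subordinate hn i fam'
  obtain ⟨hmemP, hmemQ⟩ := Submodule.mem_inf.mp hmem
  exact ⟨mem_eigenspace_iff.mp hmemP, mem_eigenspace_iff.mp hmemQ⟩

variable {d : ℕ}

theorem toEuclideanLin_mul' (A B : Matrix (Fin d) (Fin d) ℂ) :
    Matrix.toEuclideanLin (A * B) = (Matrix.toEuclideanLin A) * (Matrix.toEuclideanLin B) := by
  simp [Matrix.toEuclideanLin_eq_toLin, Matrix.toLin_mul _ (PiLp.basisFun 2 ℂ (Fin d)) _]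
  rfl

theorem toEuclideanLin_one' : Matrix.toEuclideanLin (1 : Matrix (Fin d) (Fin d) ℂ) = 1 := by
  simp [Matrix.toEuclideanLin_eq_toLin]
  rfl

/-- orthonormal eigenbasis for a unitary matrix -/
theorem unitary_eigenbasis (A : Matrix (Fin d) (Fin d) ℂ)
    (hA : A ∈ Matrix.unitaryGroup (Fin d) ℂ) :
    ∃ (b : OrthonormalBasis (Fin d) ℂ (EuclideanSpace ℂ (Fin d))) (μ : Fin d → ℂ),
      ∀ i, Matrix.toEuclideanLin A (b i) = μ i • b i := by
  classical
  set T : EuclideanSpace ℂ (Fin d) →ₗ[ℂ] EuclideanSpace ℂ (Fin d) :=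
    Matrix.toEuclideanLin A with hT
  set S : EuclideanSpace ℂ (Fin d) →ₗ[ℂ] EuclideanSpace ℂ (Fin d) :=
    Matrix.toEuclideanLin Aᴴ with hS
  have hSadj : S = LinearMap.adjoint T := Matrix.toEuclideanLin_conjTranspose_eq_adjoint A
  have h1 : Aᴴ * A = 1 := hA.1
  have h2 : A * Aᴴ = 1 := hA.2
  have hTS : T * S = 1 := by rw [hT, hS, ← toEuclideanLin_mul', h2, toEuclideanLin_one']
  have hST : S * T = 1 := by rw [hT, hS, ← toEuclideanLin_mul', h1, toEuclideanLin_one']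
  have hP : (T + S).IsSymmetric := by
    intro x y
    simp only [LinearMap.add_apply, inner_add_left, inner_add_right, hSadj,
      LinearMap.adjoint_inner_left, LinearMap.adjoint_inner_right]
    ring
  have hQ : (Complex.I • (T - S)).IsSymmetric := by
    intro x y
    simp only [LinearMap.smul_apply, LinearMap.sub_apply, inner_smul_left,
      inner_smul_right, inner_sub_left, inner_sub_right, hSadj,
      LinearMap.adjoint_inner_left, LinearMap.adjoint_inner_right, Complex.conj_I]
    ring
  have hPQ : Commute (T + S) (Complex.I • (T - S)) := by
    unfold Commute SemiconjBy
    rw [mul_smul_comm, smul_mul_assoc]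
    congr 1
    have expand1 : (T + S) * (T - S) = T * T - T * S + S * T - S * S := by
      rw [add_mul, mul_sub, mul_sub]; abel
    have expand2 : (T - S) * (T + S) = T * T + T * S - S * T - S * S := by
      rw [sub_mul, mul_add, mul_add]; abel
    rw [expand1, expand2, hTS, hST]
    abel
  have hn : Module.finrank ℂ (EuclideanSpace ℂ (Fin d)) = d := by simp
  obtain ⟨b, ν, γ, hb⟩ := exists_joint_eigenbasis hn hP hQ hPQ
  refine ⟨b, fun i => (ν i - Complex.I * γ i) / 2, fun i => ?_⟩
  obtain ⟨e1, e2⟩ := hb i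
  simp only [LinearMap.add_apply, LinearMap.smul_apply, LinearMap.sub_apply] at e1 e2
  have e3 : T (b i) - S (b i) = (-Complex.I * γ i) • b i := by
    have := congrArg (fun z => (-Complex.I) • z) e2
    rw [smul_smul, smul_smul, neg_mul, Complex.I_mul_I, neg_neg, one_smul] at this
    rw [this, neg_mul]
  have hTb : (2 : ℂ) • (T (b i)) = (ν i - Complex.I * γ i) • b i := by
    rw [two_smul]
    calc T (b i) + T (b i) = (T (b i) + S (b i)) + (T (b i) - S (b i)) := by abel
    _ = ν i • b i + (-Complex.I * γ i) • b i := by rw [e1, e3]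
    _ = (ν i - Complex.I * γ i) • b i := by rw [← add_smul]; ring_nf
  have := congrArg (fun z => (2⁻¹ : ℂ) • z) hTb
  simp only [smul_smul] at this
  rw [inv_mul_cancel₀ (two_ne_zero), one_smul] at this
  rw [this]
  congr 1
  ring

/-- Spectral theorem for unitary matrices. -/
theorem unitary_spectral (A : Matrix (Fin d) (Fin d) ℂ)
    (hA : A ∈ Matrix.unitaryGroup (Fin d) ℂ) :
    ∃ U ∈ Matrix.unitaryGroup (Fin d) ℂ, ∃ μ : Fin d → ℂ,
      A = U * Matrix.diagonal μ * star U := by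
  classical
  obtain ⟨b, μ, hb⟩ := unitary_eigenbasis A hA
  set U : Matrix (Fin d) (Fin d) ℂ :=
    (EuclideanSpace.basisFun (Fin d) ℂ).toBasis.toMatrix b.toBasis with hU
  have hUmem : U ∈ Matrix.unitaryGroup (Fin d) ℂ :=
    (EuclideanSpace.basisFun (Fin d) ℂ).toMatrix_orthonormalBasis_mem_unitary b
  refine ⟨U, hUmem, μ, ?_⟩
  have hUapp : ∀ i j, U i j = b j i := fun i j => rfl
  have hUmulvec : ∀ j, U *ᵥ Pi.single j 1 = b j := by
    intro j
    simp only [Matrix.mulVec_single, mul_one]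
    ext i
    simpa using hUapp i j
  have hAb : ∀ j, A *ᵥ ⇑(b j) = μ j • ⇑(b j) := by
    intro j
    have := congr(⇑$(hb j))
    simpa only [Matrix.toEuclideanLin_apply, WithLp.ofLp_smul] using this
  have hstarU : ∀ j, (star U) *ᵥ ⇑(b j) = Pi.single j 1 := by
    intro j
    have h0 : star U *ᵥ (U *ᵥ Pi.single j 1) = Pi.single j 1 := by
      rw [Matrix.mulVec_mulVec, hUmem.1, Matrix.one_mulVec]
    rwa [hUmulvec] at h0
  set v : Fin d → (Fin d → ℂ) := fun j k => b j k with hv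
  have hUmulvec' : ∀ j, U *ᵥ Pi.single j 1 = v j := fun j => hUmulvec j
  have hAb' : ∀ j, A *ᵥ v j = μ j • v j := fun j => hAb j
  have hstarU' : ∀ j, star U *ᵥ v j = Pi.single j 1 := fun j => hstarU j
  have key : star U * A * U = Matrix.diagonal μ := by
    apply Matrix.toEuclideanLin.injective
    apply Module.Basis.ext (EuclideanSpace.basisFun (Fin d) ℂ).toBasis
    intro i
    have vec : (star U * A * U) *ᵥ Pi.single i 1 = Pi.single i (μ i) := by
      rw [← Matrix.mulVec_mulVec, ← Matrix.mulVec_mulVec, hUmulvec' i, hAb' i,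
        Matrix.mulVec_smul, hstarU' i]
      funext k
      simp [Pi.single_apply]
    have vec2 : (Matrix.diagonal μ) *ᵥ Pi.single i 1 = Pi.single i (μ i) := by
      rw [Matrix.diagonal_mulVec_single, mul_one]
    have basis_eq : ((EuclideanSpace.basisFun (Fin d) ℂ).toBasis i : EuclideanSpace ℂ (Fin d))
        = WithLp.toLp 2 (Pi.single i 1) := by
      simp [EuclideanSpace.basisFun_apply]
    rw [basis_eq, Matrix.toEuclideanLin_apply_piLp_toLp,
      Matrix.toEuclideanLin_apply_piLp_toLp, vec, vec2]
  have h2 := congrArg (fun M => U * M * star U) key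
  rw [← h2]
  simp only [← Matrix.mul_assoc]
  rw [hUmem.2, Matrix.one_mul, Matrix.mul_assoc, hUmem.2, Matrix.mul_one]

variable {d : ℕ}

theorem trace_mul_conjTranspose_eq (M : Matrix (Fin d) (Fin d) ℂ) :
    (M * Mᴴ).trace = ((∑ i, ∑ j, Complex.normSq (M i j) : ℝ) : ℂ) := by
  simp only [Matrix.trace, Matrix.diag, Matrix.mul_apply, Matrix.conjTranspose_apply,
    Complex.mul_conj]
  push_cast
  simp [← Complex.mul_conj]

theorem trace_re_eq_sum (M : Matrix (Fin d) (Fin d) ℂ) :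
    (M * Mᴴ).trace.re = ∑ i, ∑ j, Complex.normSq (M i j) := by
  rw [trace_mul_conjTranspose_eq, Complex.ofReal_re]

theorem frobNorm_eq_sqrt_sum (M : Matrix (Fin d) (Fin d) ℂ) :
    frobNorm M = Real.sqrt (∑ i, ∑ j, Complex.normSq (M i j)) := by
  rw [frobNorm, trace_re_eq_sum]

theorem frob_mul_unitary_right (M U : Matrix (Fin d) (Fin d) ℂ)
    (hU : U ∈ Matrix.unitaryGroup (Fin d) ℂ) :
    frobNorm (M * U) = frobNorm M := by
  unfold frobNorm
  congr 2
  rw [Matrix.conjTranspose_mul, Matrix.mul_assoc, ← Matrix.mul_assoc U, ← Matrix.star_eq_conjTranspose U,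
    hU.2, Matrix.one_mul]

theorem frob_mul_unitary_left (M U : Matrix (Fin d) (Fin d) ℂ)
    (hU : U ∈ Matrix.unitaryGroup (Fin d) ℂ) :
    frobNorm (U * M) = frobNorm M := by
  unfold frobNorm
  congr 2
  rw [Matrix.conjTranspose_mul, Matrix.trace_mul_comm, Matrix.mul_assoc,
    ← Matrix.mul_assoc Uᴴ, ← Matrix.star_eq_conjTranspose U, hU.1, Matrix.one_mul,
    Matrix.trace_mul_comm]

theorem normSq_sub_le (x y : ℂ) :
    Complex.normSq (x - y) ≤ 2 * Complex.normSq (x - 1) + 2 * Complex.normSq (y - 1) := by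
  simp only [Complex.normSq_apply, Complex.sub_re, Complex.sub_im, Complex.one_re, Complex.one_im]
  nlinarith [sq_nonneg ((x.re - 1) + (y.re - 1)), sq_nonneg (x.im + y.im),
    sq_nonneg ((x.re - 1) - (y.re - 1)), sq_nonneg (x.im - y.im)]

theorem pair_le_sum (f : Fin d → ℝ) (hf : ∀ k, 0 ≤ f k) (i j : Fin d) (hij : i ≠ j) :
    f i + f j ≤ ∑ k, f k := by
  classical
  have h1 : ∑ k, f k = f i + ∑ k ∈ Finset.univ.erase i, f k :=
    (Finset.add_sum_erase Finset.univ f (Finset.mem_univ i)).symm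
  have h2 : f j ≤ ∑ k ∈ Finset.univ.erase i, f k :=
    Finset.single_le_sum (fun k _ => hf k)
      (Finset.mem_erase.mpr ⟨hij.symm, Finset.mem_univ j⟩)
  linarith

/-- Core inequality for the diagonal case. -/
theorem core_diag (μ : Fin d → ℂ) (W : Matrix (Fin d) (Fin d) ℂ) :
    ∑ i, ∑ j, Complex.normSq ((Matrix.diagonal μ * W - W * Matrix.diagonal μ) i j)
      ≤ 2 * (∑ k, Complex.normSq (μ k - 1)) * (∑ i, ∑ j, Complex.normSq (W i j)) := by
  classical
  set a : ℝ := ∑ k, Complex.normSq (μ k - 1) with ha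
  have ha0 : 0 ≤ a := Finset.sum_nonneg fun k _ => Complex.normSq_nonneg _
  have hmain : ∀ i j, Complex.normSq ((Matrix.diagonal μ * W - W * Matrix.diagonal μ) i j)
      ≤ 2 * a * Complex.normSq (W i j) := by
    intro i j
    have hentry : (Matrix.diagonal μ * W - W * Matrix.diagonal μ) i j
        = (μ i - μ j) * W i j := by
      simp only [Matrix.sub_apply, Matrix.diagonal_mul, Matrix.mul_diagonal, sub_mul]
      ring
    rw [hentry, Complex.normSq_mul]
    by_cases hij : i = j
    · subst hij
      simp only [sub_self, Complex.normSq_zero, zero_mul]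
      have := Complex.normSq_nonneg (W i i)
      nlinarith
    · have h1 := normSq_sub_le (μ i) (μ j)
      have h2 := pair_le_sum (fun k => Complex.normSq (μ k - 1))
        (fun k => Complex.normSq_nonneg _) i j hij
      have h3 : Complex.normSq (μ i - μ j) ≤ 2 * a := by
        linarith
      have := mul_le_mul_of_nonneg_right h3 (Complex.normSq_nonneg (W i j))
      linarith
  calc ∑ i, ∑ j, Complex.normSq ((Matrix.diagonal μ * W - W * Matrix.diagonal μ) i j)
      ≤ ∑ i, ∑ j, 2 * a * Complex.normSq (W i j) := by
        apply Finset.sum_le_sum; intro i _; apply Finset.sum_le_sum; intro j _; exact hmain i j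
    _ = 2 * a * (∑ i, ∑ j, Complex.normSq (W i j)) := by
        simp_rw [Finset.mul_sum]

end Aux

open Matrix in
/-- For unitary `A, B` with group commutator `C = A B A⁻¹ B⁻¹`, we have
`‖C − I‖ ≤ √2 ‖A − I‖ ‖B − I‖` in Frobenius norm. -/
theorem frobNorm_commutator_le {d : ℕ}
    (A B : Matrix (Fin d) (Fin d) ℂ)
    (hA : A ∈ Matrix.unitaryGroup (Fin d) ℂ)
    (hB : B ∈ Matrix.unitaryGroup (Fin d) ℂ)
    (C : Matrix (Fin d) (Fin d) ℂ) (hC : C = A * B * A⁻¹ * B⁻¹) :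
    frobNorm (C - 1) ≤ Real.sqrt 2 * frobNorm (A - 1) * frobNorm (B - 1) := by
  classical
  have hAA : A * Aᴴ = 1 := by rw [← Matrix.star_eq_conjTranspose]; exact hA.2
  have hBB : B * Bᴴ = 1 := by rw [← Matrix.star_eq_conjTranspose]; exact hB.2
  have hAinv : A⁻¹ = Aᴴ := Matrix.inv_eq_right_inv hAA
  have hBinv : B⁻¹ = Bᴴ := Matrix.inv_eq_right_inv hBB
  have hfact : C - 1 = (A * B - B * A) * (Aᴴ * Bᴴ) := by
    rw [hC, hAinv, hBinv]
    have expand : (A * B - B * A) * (Aᴴ * Bᴴ) = A * B * Aᴴ * Bᴴ - B * (A * Aᴴ) * Bᴴ := by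
      noncomm_ring
    rw [expand, hAA, Matrix.mul_one, hBB]
  have hABmem : Aᴴ * Bᴴ ∈ Matrix.unitaryGroup (Fin d) ℂ := by
    rw [← Matrix.star_eq_conjTranspose, ← Matrix.star_eq_conjTranspose]
    exact mul_mem (Unitary.star_mem hA) (Unitary.star_mem hB)
  have step1 : frobNorm (C - 1) = frobNorm (A * B - B * A) := by
    rw [hfact, frob_mul_unitary_right _ _ hABmem]
  obtain ⟨U, hU, μ, hspec⟩ := unitary_spectral A hA
  have hUstar : star U ∈ Matrix.unitaryGroup (Fin d) ℂ := Unitary.star_mem hU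
  have hUU : U * star U = 1 := hU.2
  have hsUU : star U * U = 1 := hU.1
  set D := Matrix.diagonal μ with hD
  set W := star U * B * U - 1 with hW
  have hsUU' : ∀ X : Matrix (Fin d) (Fin d) ℂ, star U * (U * X) = X := fun X => by
    rw [← Matrix.mul_assoc, hsUU, Matrix.one_mul]
  have hUU' : ∀ X : Matrix (Fin d) (Fin d) ℂ, U * (star U * X) = X := fun X => by
    rw [← Matrix.mul_assoc, hUU, Matrix.one_mul]
  have hBW : B = U * (W + 1) * star U := by
    rw [hW]
    simp only [sub_add_cancel]
    simp only [Matrix.mul_assoc, hsUU', hUU']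
    rw [hUU, Matrix.mul_one]
  have hcomm : A * B - B * A = U * (D * W - W * D) * star U := by
    rw [hspec, hBW]
    have h1 : U * D * star U * (U * (W + 1) * star U) = U * (D * (W + 1)) * star U := by
      simp only [Matrix.mul_assoc, hsUU', hUU']
    have h2 : U * (W + 1) * star U * (U * D * star U) = U * ((W + 1) * D) * star U := by
      simp only [Matrix.mul_assoc, hsUU', hUU']
    rw [h1, h2, ← Matrix.sub_mul]
    congr 2
    noncomm_ring
  have step2 : frobNorm (A * B - B * A) = frobNorm (D * W - W * D) := by
    rw [hcomm, frob_mul_unitary_right _ _ hUstar, frob_mul_unitary_left _ _ hU]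
  have hA1 : frobNorm (A - 1) = frobNorm (D - 1) := by
    have : A - 1 = U * (D - 1) * star U := by
      rw [hspec]
      rw [Matrix.mul_sub, Matrix.sub_mul, Matrix.mul_one, hUU]
    rw [this, frob_mul_unitary_right _ _ hUstar, frob_mul_unitary_left _ _ hU]
  have hB1 : frobNorm (B - 1) = frobNorm W := by
    have : B - 1 = U * W * star U := by
      rw [hBW, Matrix.mul_add, Matrix.mul_one, Matrix.add_mul, hUU]
      abel
    rw [this, frob_mul_unitary_right _ _ hUstar, frob_mul_unitary_left _ _ hU]
  -- diagonal computation
  set a : ℝ := ∑ k, Complex.normSq (μ k - 1) with ha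
  set b : ℝ := ∑ i, ∑ j, Complex.normSq (W i j) with hb
  have ha0 : 0 ≤ a := Finset.sum_nonneg fun k _ => Complex.normSq_nonneg _
  have hb0 : 0 ≤ b := Finset.sum_nonneg fun i _ =>
    Finset.sum_nonneg fun j _ => Complex.normSq_nonneg _
  have hDa : frobNorm (D - 1) = Real.sqrt a := by
    rw [frobNorm_eq_sqrt_sum]
    congr 1
    rw [ha]
    apply Finset.sum_congr rfl
    intro i _
    have : ∀ j, (D - 1) i j = if i = j then μ i - 1 else 0 := by
      intro j
      rw [hD]
      by_cases h : i = j <;>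
        simp [Matrix.sub_apply, Matrix.diagonal_apply, Matrix.one_apply, h]
    calc ∑ j, Complex.normSq ((D - 1) i j)
        = ∑ j, if i = j then Complex.normSq (μ i - 1) else 0 := by
          apply Finset.sum_congr rfl; intro j _; rw [this j]
          by_cases h : i = j <;> simp [h]
      _ = Complex.normSq (μ i - 1) := by simp
  have hWb : frobNorm W = Real.sqrt b := by rw [frobNorm_eq_sqrt_sum]
  have hcore := core_diag μ W
  have final : frobNorm (D * W - W * D) ≤ Real.sqrt 2 * Real.sqrt a * Real.sqrt b := by
    rw [frobNorm_eq_sqrt_sum]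
    have h1 : (∑ i, ∑ j, Complex.normSq ((D * W - W * D) i j)) ≤ 2 * a * b := hcore
    calc Real.sqrt (∑ i, ∑ j, Complex.normSq ((D * W - W * D) i j))
        ≤ Real.sqrt (2 * a * b) := Real.sqrt_le_sqrt h1
      _ = Real.sqrt 2 * Real.sqrt a * Real.sqrt b := by
        rw [Real.sqrt_mul (by positivity : (0:ℝ) ≤ 2 * a), Real.sqrt_mul (by norm_num : (0:ℝ) ≤ 2)]
  rw [step1, step2, hA1, hB1, hDa, hWb]
  exact final
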